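/- Let μ and ν be Borel probability measures on ℝ that are exact dimensional with dimensions s and t respectively. Then the product measure μ × ν on ℝ² is exact dimensional with dimension s + t, i.e., for (μ×ν)-a.e. (x,y), lim_{η↓0} log (μ×ν)(B((x,y),η)) / log η = s + t. -/

import Mathlib

open MeasureTheory Filter Topology

/-- a.e. point has positive measure closed balls. -/
lemma ae_pos_ball (θ : Measure ℝ) :
    ∀ᵐ x ∂θ, ∀ η : ℝ, 0 < η → 0 < θ (Metric.closedBall x η) := by
  have h : θ {x : ℝ | ¬ ∀ η : ℝ, 0 < η → 0 < θ (Metric.closedBall x η)} = 0 := by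
    apply measure_null_of_locally_null
    intro x hx
    simp only [Set.mem_setOf_eq, not_forall] at hx
    obtain ⟨η, hη, h0⟩ := hx
    push_neg at h0
    refine ⟨Metric.closedBall x η, ?_, ?_⟩
    · exact mem_nhdsWithin_of_mem_nhds (Metric.closedBall_mem_nhds x hη)
    · exact le_antisymm h0 zero_le
  exact h

lemma ae_prod_of_ae_ae {μ ν : Measure ℝ} [SFinite ν] {P Q : ℝ → Prop}
    (hP : ∀ᵐ x ∂μ, P x) (hQ : ∀ᵐ y ∂ν, Q y) :
    ∀ᵐ p ∂μ.prod ν, P p.1 ∧ Q p.2 := by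
  rw [MeasureTheory.ae_iff] at hP hQ ⊢
  set u := toMeasurable μ {x | ¬ P x} with hu
  set v := toMeasurable ν {y | ¬ Q y} with hv
  have husub : {p : ℝ × ℝ | ¬ (P p.1 ∧ Q p.2)} ⊆ (u ×ˢ Set.univ) ∪ (Set.univ ×ˢ v) := by
    intro p hp
    simp only [Set.mem_setOf_eq, not_and_or] at hp
    rcases hp with h | h
    · exact Or.inl ⟨subset_toMeasurable _ _ h, trivial⟩
    · exact Or.inr ⟨trivial, subset_toMeasurable _ _ h⟩
  refine le_antisymm ?_ zero_le
  calc (μ.prod ν) {p : ℝ × ℝ | ¬ (P p.1 ∧ Q p.2)}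
      ≤ (μ.prod ν) ((u ×ˢ Set.univ) ∪ (Set.univ ×ˢ v)) := measure_mono husub
    _ ≤ (μ.prod ν) (u ×ˢ Set.univ) + (μ.prod ν) (Set.univ ×ˢ v) := measure_union_le _ _
    _ = 0 := by
        rw [Measure.prod_prod, Measure.prod_prod, measure_toMeasurable, measure_toMeasurable,
          hP, hQ]
        simp

/-- `θ` is exact dimensional with dimension `s`: for `θ`-a.e. `x`,
`log θ(B(x,η)) / log η → s` as `η ↓ 0`. -/
def IsExactDim (θ : Measure ℝ) (s : ℝ) : Prop :=
  ∀ᵐ x ∂θ, Tendsto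
    (fun η : ℝ => Real.log (θ (Metric.closedBall x η)).toReal / Real.log η)
    (𝓝[>] (0 : ℝ)) (𝓝 s)

/-- If `μ` and `ν` are exact dimensional with dimensions `s` and `t`, then `μ × ν` on
`ℝ² = ℝ × ℝ` (with the sup metric) is exact dimensional with dimension `s + t`. -/
theorem isExactDim_prod (μ ν : Measure ℝ) [IsProbabilityMeasure μ] [IsProbabilityMeasure ν]
    (s t : ℝ) (hμ : IsExactDim μ s) (hν : IsExactDim ν t) :
    ∀ᵐ p ∂(μ.prod ν), Tendsto
      (fun η : ℝ => Real.log ((μ.prod ν) (Metric.closedBall p η)).toReal / Real.log η)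
      (𝓝[>] (0 : ℝ)) (𝓝 (s + t)) := by
  have key := ae_prod_of_ae_ae (μ := μ) (ν := ν) (hμ.and (ae_pos_ball μ)) (hν.and (ae_pos_ball ν))
  filter_upwards [key] with p hp
  obtain ⟨⟨h1, h2⟩, h3, h4⟩ := hp
  have hsum := h1.add h3
  apply hsum.congr'
  filter_upwards [self_mem_nhdsWithin] with η (hη : 0 < η)
  have hball : Metric.closedBall p η
      = Metric.closedBall p.1 η ×ˢ Metric.closedBall p.2 η := by
    rw [closedBall_prod_same]
  have hμ0 : (μ (Metric.closedBall p.1 η)).toReal ≠ 0 :=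
    (ENNReal.toReal_pos (h2 η hη).ne' (measure_ne_top μ _)).ne'
  have hν0 : (ν (Metric.closedBall p.2 η)).toReal ≠ 0 :=
    (ENNReal.toReal_pos (h4 η hη).ne' (measure_ne_top ν _)).ne'
  rw [hball, Measure.prod_prod, ENNReal.toReal_mul, Real.log_mul hμ0 hν0, add_div]
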